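/- For β > 0, the Legendre transform I(z) = sup_{λ∈ℝ} (λz − Λ_∞(λ)) of Λ_∞ satisfies: for |z| < 1, I(z) = z·log( (z e^{−2β} + √(1 + z²(e^{−4β} − 1)))/√(1−z²) ) − log( (e^{β}√(1 + z²(e^{−4β}−1)) + e^{−β}) / (√(1−z²)(e^{β}+e^{−β})) ). -/

import Mathlib

open Real

noncomputable def Lam (β l : ℝ) : ℝ :=
  Real.log ((Real.exp β * Real.cosh l +
      Real.sqrt (Real.exp (2 * β) * (Real.sinh l) ^ 2 + Real.exp (-(2 * β)))) /
    (Real.exp β + Real.exp (-β)))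

private lemma sq_combo_le (z q X Y : ℝ) (hq2 : q ^ 2 = 1 - z ^ 2) :
    (z * X + q * Y) ^ 2 ≤ X ^ 2 + Y ^ 2 := by
  nlinarith [sq_nonneg (q * X - z * Y)]

set_option maxHeartbeats 1000000 in
/-- explicit formula for the Legendre transform of `Λ_∞` on `|z| < 1`. -/
theorem stmt6 (β z : ℝ) (hβ : 0 < β) (hz : |z| < 1) :
    (⨆ l : ℝ, (l * z - Lam β l)) =
      z * Real.log ((z * Real.exp (-(2 * β)) +
            Real.sqrt (1 + z ^ 2 * (Real.exp (-(4 * β)) - 1))) /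
          Real.sqrt (1 - z ^ 2)) -
      Real.log ((Real.exp β * Real.sqrt (1 + z ^ 2 * (Real.exp (-(4 * β)) - 1)) +
            Real.exp (-β)) /
          (Real.sqrt (1 - z ^ 2) * (Real.exp β + Real.exp (-β)))) := by
  have hz2 : z ^ 2 < 1 := by nlinarith [sq_abs z, abs_nonneg z]
  have hz1 := abs_lt.mp hz
  have hq2 : Real.sqrt (1 - z ^ 2) ^ 2 = 1 - z ^ 2 := Real.sq_sqrt (by linarith)
  set q := Real.sqrt (1 - z ^ 2) with hqdef
  have hqpos : 0 < q := Real.sqrt_pos.mpr (by linarith)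
  set a := Real.exp (-(2 * β)) with hadef
  have hapos : 0 < a := Real.exp_pos _
  have ha4 : Real.exp (-(4 * β)) = a ^ 2 := by rw [hadef, sq, ← Real.exp_add]; ring_nf
  have hba : Real.exp β * a = Real.exp (-β) := by rw [hadef, ← Real.exp_add]; ring_nf
  have hbb : Real.exp (2 * β) * a = 1 := by rw [hadef, ← Real.exp_add]; simp
  have hcc : Real.exp (-β) ^ 2 = a := by rw [hadef, sq, ← Real.exp_add]; ring_nf
  set c := Real.exp β + Real.exp (-β) with hcdef
  have hcpos : 0 < c := by positivity
  have hLamEq : ∀ l : ℝ, Lam β l = Real.log ((Real.exp β * Real.cosh l +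
      Real.sqrt (Real.exp (2 * β) * Real.sinh l ^ 2 + a)) / c) := fun l => rfl
  have hR2' : 1 + z ^ 2 * (Real.exp (-(4 * β)) - 1) = q ^ 2 + z ^ 2 * a ^ 2 := by
    rw [ha4, hq2]; ring
  have hRin : (0:ℝ) ≤ 1 + z ^ 2 * (Real.exp (-(4 * β)) - 1) := by
    rw [hR2']; positivity
  set R := Real.sqrt (1 + z ^ 2 * (Real.exp (-(4 * β)) - 1)) with hRdef
  have hRnn : 0 ≤ R := Real.sqrt_nonneg _
  have hR2 : R ^ 2 = q ^ 2 + z ^ 2 * a ^ 2 := by rw [hRdef, Real.sq_sqrt hRin, hR2']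
  clear_value q a R
  have hq2pos : 0 < q ^ 2 := pow_pos hqpos 2
  have haR : z ^ 2 * a ^ 2 < R ^ 2 := by linarith
  have hRpos : 0 < R := by nlinarith [sq_nonneg (z * a)]
  have hzaR1 : 0 < z * a + R := by nlinarith [sq_nonneg (z * a + R)]
  have hzaR2 : 0 < R - z * a := by nlinarith [sq_nonneg (z * a - R)]
  set l₀ := Real.arsinh (z * a / q) with hl₀def
  have hsinh : Real.sinh l₀ = z * a / q := Real.sinh_arsinh _
  have hcosh : Real.cosh l₀ = R / q := by
    rw [hl₀def, Real.cosh_arsinh]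
    rw [show 1 + (z * a / q) ^ 2 = (R / q) ^ 2 by field_simp; linarith [hR2]]
    exact Real.sqrt_sq (div_nonneg hRnn hqpos.le)
  have hexp : Real.exp l₀ = (z * a + R) / q := by
    rw [← Real.cosh_add_sinh l₀, hsinh, hcosh]; ring
  have hexpneg : Real.exp (-l₀) = (R - z * a) / q := by
    rw [Real.exp_neg, hexp, inv_div, div_eq_div_iff hzaR1.ne' hqpos.ne']
    linarith [hR2]
  clear_value l₀
  have hSstar : Real.sqrt (Real.exp (2 * β) * Real.sinh l₀ ^ 2 + a) = Real.exp (-β) / q := by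
    rw [show Real.exp (2 * β) * Real.sinh l₀ ^ 2 + a = (Real.exp (-β) / q) ^ 2 by
      rw [hsinh]; field_simp
      linear_combination (z ^ 2 * a) * hbb + a * hq2 - hcc]
    exact Real.sqrt_sq (div_nonneg (Real.exp_pos _).le hqpos.le)
  set D := Real.exp β * R + Real.exp (-β) with hDdef
  have hDpos : 0 < D := by positivity
  clear_value D
  have hμ : (0:ℝ) < D / q := div_pos hDpos hqpos
  have hLam0 : Lam β l₀ = Real.log (D / q) - Real.log c := by
    rw [hLamEq l₀, hcosh, hSstar, show Real.exp β * (R / q) + Real.exp (-β) / q = D / q by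
      rw [hDdef]; ring, Real.log_div hμ.ne' hcpos.ne']
  -- weights
  set w₁ := (1 + z) * Real.exp β * (z * a + R) / (2 * D) with hw₁def
  set w₂ := (1 - z ^ 2) * Real.exp (-β) / D with hw₂def
  set w₃ := (1 - z) * Real.exp β * (R - z * a) / (2 * D) with hw₃def
  clear_value w₁ w₂ w₃
  have hw₁ : 0 ≤ w₁ := by
    rw [hw₁def]
    exact div_nonneg (mul_nonneg (mul_nonneg (by linarith) (Real.exp_pos β).le) hzaR1.le)
      (by linarith)
  have hw₂ : 0 ≤ w₂ := by
    rw [hw₂def]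
    exact div_nonneg (mul_nonneg (by linarith) (Real.exp_pos _).le) hDpos.le
  have hw₃ : 0 ≤ w₃ := by
    rw [hw₃def]
    exact div_nonneg (mul_nonneg (mul_nonneg (by linarith) (Real.exp_pos β).le) hzaR2.le)
      (by linarith)
  have hwsum : w₁ + w₂ + w₃ = 1 := by
    have hD0 : D ≠ 0 := hDpos.ne'
    rw [hw₁def, hw₂def, hw₃def]
    field_simp
    rw [hDdef]
    linear_combination (2 * z ^ 2) * hba
  have hwdiff : w₁ - w₃ = z := by
    have hD0 : D ≠ 0 := hDpos.ne'
    rw [hw₁def, hw₃def]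
    field_simp
    rw [hDdef]
    linear_combination (2 * z) * hba
  have hc1 : w₁ * (D / q) * Real.exp (-l₀) = (1 + z) * Real.exp β / 2 := by
    rw [hw₁def, hexpneg]; field_simp
    linear_combination (1 + z) * hR2
  have hc2 : w₂ * (D / q) = q * Real.exp (-β) := by
    rw [hw₂def]; field_simp
    linear_combination (-1) * hq2
  have hc3 : w₃ * (D / q) * Real.exp l₀ = (1 - z) * Real.exp β / 2 := by
    rw [hw₃def, hexp]; field_simp
    linear_combination (1 - z) * hR2
  -- the upper bound
  have hub : ∀ l : ℝ, l * z - Lam β l ≤ l₀ * z - Lam β l₀ := by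
    intro l
    set S := Real.sqrt (Real.exp (2 * β) * Real.sinh l ^ 2 + a) with hSdef
    have hSnn : 0 ≤ S := Real.sqrt_nonneg _
    have hSin : (0:ℝ) ≤ Real.exp (2 * β) * Real.sinh l ^ 2 + a := by
      have := mul_nonneg (Real.exp_pos (2 * β)).le (sq_nonneg (Real.sinh l)); linarith
    have hS2 : S ^ 2 = (Real.exp β * Real.sinh l) ^ 2 + Real.exp (-β) ^ 2 := by
      rw [hSdef, Real.sq_sqrt hSin,
        show Real.exp (2 * β) = Real.exp β * Real.exp β by rw [← Real.exp_add]; ring_nf, ← hcc]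
      ring
    clear_value S
    have key1 : z * (Real.exp β * Real.sinh l) + q * Real.exp (-β) ≤ S := by
      have h1 : (z * (Real.exp β * Real.sinh l) + q * Real.exp (-β)) ^ 2 ≤ S ^ 2 := by
        rw [hS2]
        exact sq_combo_le z q _ _ hq2
      calc z * (Real.exp β * Real.sinh l) + q * Real.exp (-β)
          ≤ |z * (Real.exp β * Real.sinh l) + q * Real.exp (-β)| := le_abs_self _
        _ = Real.sqrt ((z * (Real.exp β * Real.sinh l) + q * Real.exp (-β)) ^ 2) :=
            (Real.sqrt_sq_eq_abs _).symm
        _ ≤ Real.sqrt (S ^ 2) := Real.sqrt_le_sqrt h1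
        _ = S := by rw [Real.sqrt_sq hSnn]
    set d := l - l₀ with hddef
    have hrpow : ∀ u w : ℝ, Real.exp u ^ w = Real.exp (u * w) := fun u w =>
      (Real.exp_mul u w).symm
    have hgm := Real.geom_mean_le_arith_mean3_weighted hw₁ hw₂ hw₃
      (Real.exp_pos (Real.log (D / q) + d)).le (Real.exp_pos (Real.log (D / q))).le
      (Real.exp_pos (Real.log (D / q) - d)).le hwsum
    rw [hrpow, hrpow, hrpow, ← Real.exp_add, ← Real.exp_add] at hgm
    have hgl : Real.exp ((Real.log (D / q) + d) * w₁ + Real.log (D / q) * w₂ +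
        (Real.log (D / q) - d) * w₃) = (D / q) * Real.exp (z * d) := by
      rw [show (Real.log (D / q) + d) * w₁ + Real.log (D / q) * w₂ +
          (Real.log (D / q) - d) * w₃ = Real.log (D / q) + z * d by
        linear_combination Real.log (D / q) * hwsum + d * hwdiff,
        Real.exp_add, Real.exp_log hμ]
    rw [hgl] at hgm
    have hd1 : Real.exp (Real.log (D / q) + d) = (D / q) * (Real.exp l * Real.exp (-l₀)) := by
      rw [Real.exp_add, Real.exp_log hμ, hddef, Real.exp_sub]
      rw [Real.exp_neg]
      ring
    have hd2 : Real.exp (Real.log (D / q) - d) = (D / q) * (Real.exp (-l) * Real.exp l₀) := by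
      rw [Real.exp_sub, Real.exp_log hμ, hddef, Real.exp_sub, Real.exp_neg]
      field_simp
    rw [hd1, hd2, Real.exp_log hμ] at hgm
    have hident : w₁ * ((D / q) * (Real.exp l * Real.exp (-l₀))) + w₂ * (D / q) +
        w₃ * ((D / q) * (Real.exp (-l) * Real.exp l₀)) =
        Real.exp β * Real.cosh l + (z * (Real.exp β * Real.sinh l) + q * Real.exp (-β)) := by
      have e1 : w₁ * ((D / q) * (Real.exp l * Real.exp (-l₀))) =
          ((1 + z) * Real.exp β / 2) * Real.exp l := by rw [← hc1]; ring
      have e3 : w₃ * ((D / q) * (Real.exp (-l) * Real.exp l₀)) =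
          ((1 - z) * Real.exp β / 2) * Real.exp (-l) := by rw [← hc3]; ring
      rw [e1, e3, hc2, Real.cosh_eq, Real.sinh_eq]; ring
    rw [hident] at hgm
    have hmain : (D / q) * Real.exp (z * d) ≤ Real.exp β * Real.cosh l + S := by linarith
    have hnum : 0 < (D / q) * Real.exp (z * d) := mul_pos hμ (Real.exp_pos _)
    have hNpos : 0 < Real.exp β * Real.cosh l + S := by
      have h1 := mul_pos (Real.exp_pos β) (Real.cosh_pos (x := l))
      linarith
    have hLaml : Real.log (D / q) + z * d - Real.log c ≤ Lam β l := by
      rw [hLamEq l, ← hSdef, Real.log_div hNpos.ne' hcpos.ne']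
      have hle : (D / q) * Real.exp (z * d) / c ≤ (Real.exp β * Real.cosh l + S) / c :=
        (div_le_div_iff_of_pos_right hcpos).mpr hmain
      have hlog := (Real.log_le_log_iff (div_pos hnum hcpos) (div_pos hNpos hcpos)).mpr hle
      rw [Real.log_div hnum.ne' hcpos.ne', Real.log_div hNpos.ne' hcpos.ne',
        Real.log_mul hμ.ne' (Real.exp_pos _).ne', Real.log_exp] at hlog
      linarith
    rw [hLam0]
    have hzd : z * d = z * l - z * l₀ := by rw [hddef]; ring
    rw [hzd] at hLaml
    linarith
  -- compute the supremum
  have hbdd : BddAbove (Set.range fun l : ℝ => l * z - Lam β l) := by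
    refine ⟨l₀ * z - Lam β l₀, ?_⟩
    rintro x ⟨l, rfl⟩
    exact hub l
  have hsup : (⨆ l : ℝ, (l * z - Lam β l)) = l₀ * z - Lam β l₀ :=
    le_antisymm (ciSup_le hub) (le_ciSup hbdd l₀)
  rw [hsup, hLam0]
  have hl0 : l₀ = Real.log ((z * a + R) / q) := by rw [← Real.log_exp l₀, hexp]
  rw [show D / (q * c) = D / q / c from (div_div D q c).symm,
    Real.log_div hμ.ne' hcpos.ne', hl0]
  ring
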